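/- Let k be a field of characteristic 0, let 𝔱3 be the Lie algebra with generators t12, t13, t23 and relations [t12+t13, t23] = 0, [t12+t23, t13] = 0, [t13+t23, t12] = 0. Then 𝔱3 is the direct sum of its center k·(t12+t13+t23) and the free Lie algebra generated by t13 and t23 (equivalently, by t12 and t23). -/

import Mathlib

theorem aux_free_span (k : Type*) [Field k] {ι : Type*} (p : Submodule k (FreeLieAlgebra k ι))
    (hlie : ∀ x ∈ p, ∀ y ∈ p, ⁅x, y⁆ ∈ p) (hgen : ∀ i, FreeLieAlgebra.of k i ∈ p) :
    ∀ x, x ∈ p := by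
  let S : LieSubalgebra k (FreeLieAlgebra k ι) :=
    { p with lie_mem' := fun {x y} hx hy => hlie x hx y hy }
  let f : FreeLieAlgebra k ι →ₗ⁅k⁆ S :=
    FreeLieAlgebra.lift k (fun i => (⟨FreeLieAlgebra.of k i, hgen i⟩ : S))
  have h : S.incl.comp f = LieHom.id := by
    apply FreeLieAlgebra.hom_ext
    intro x
    simp [f, FreeLieAlgebra.lift_of_apply]
  intro x
  have hx : S.incl (f x) = x := by
    have := LieHom.congr_fun h x
    simpa using this
  rw [← hx]
  exact (f x).2

def auxQuotLift {k L M : Type*} [CommRing k] [LieRing L] [LieAlgebra k L] [LieRing M]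
    [LieAlgebra k M] (I : LieIdeal k L) (f : L →ₗ⁅k⁆ M) (h : ∀ x ∈ I, f x = 0) :
    (L ⧸ I) →ₗ⁅k⁆ M :=
  { toLinearMap := (I : Submodule k L).liftQ f.toLinearMap (fun x hx => h x hx)
    map_lie' := by
      rintro ⟨x⟩ ⟨y⟩
      exact f.map_lie x y }

theorem auxQuotLift_mk {k L M : Type*} [CommRing k] [LieRing L] [LieAlgebra k L] [LieRing M]
    [LieAlgebra k M] (I : LieIdeal k L) (f : L →ₗ⁅k⁆ M) (h : ∀ x ∈ I, f x = 0) (x : L) :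
    auxQuotLift I f h (LieSubmodule.Quotient.mk (N := I) x) = f x :=
  rfl

theorem stmt18 (k : Type*) [Field k] [CharZero k] :
    let L := FreeLieAlgebra k (Fin 3)
    -- generators: index 0 ↦ t12, 1 ↦ t13, 2 ↦ t23
    let a : L := FreeLieAlgebra.of k 0
    let b : L := FreeLieAlgebra.of k 1
    let c : L := FreeLieAlgebra.of k 2
    let I : LieIdeal k L :=
      LieSubmodule.lieSpan k L {⁅a + b, c⁆, ⁅a + c, b⁆, ⁅b + c, a⁆}
    let T := L ⧸ I
    let t12 : T := LieSubmodule.Quotient.mk (N := I) a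
    let t13 : T := LieSubmodule.Quotient.mk (N := I) b
    let t23 : T := LieSubmodule.Quotient.mk (N := I) c
    let cen : T := t12 + t13 + t23
    let φ : FreeLieAlgebra k (Fin 2) →ₗ⁅k⁆ T := FreeLieAlgebra.lift k ![t13, t23]
    (∀ v : T, ⁅cen, v⁆ = 0) ∧ Function.Injective φ ∧
      Submodule.span k {cen} ⊓ LinearMap.range (φ : FreeLieAlgebra k (Fin 2) →ₗ[k] T) = ⊥ ∧
      Submodule.span k {cen} ⊔ LinearMap.range (φ : FreeLieAlgebra k (Fin 2) →ₗ[k] T) = ⊤ := by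
  intro L a b c I T t12 t13 t23 cen φ
  have hI1 : ⁅a + b, c⁆ ∈ I := LieSubmodule.subset_lieSpan (by simp)
  have hI2 : ⁅a + c, b⁆ ∈ I := LieSubmodule.subset_lieSpan (by simp)
  have hI3 : ⁅b + c, a⁆ ∈ I := LieSubmodule.subset_lieSpan (by simp)
  -- the sum a+b+c brackets into I with everything
  have key : ∀ x : L, ⁅a + b + c, x⁆ ∈ I := by
    have := aux_free_span k
      (Submodule.comap ((LieAlgebra.ad k L (a + b + c) : L →ₗ[k] L)) (I : Submodule k L))
      (fun x hx y hy => by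
        simp only [Submodule.mem_comap, LieAlgebra.ad_apply] at hx hy ⊢
        change ⁅a + b + c, ⁅x, y⁆⁆ ∈ _
        rw [leibniz_lie]
        exact I.add_mem' (lie_mem_left k L I _ _ hx) (lie_mem_right k L I _ _ hy))
      (fun i => by
        simp only [Submodule.mem_comap, LieAlgebra.ad_apply]
        fin_cases i
        · show ⁅a + b + c, a⁆ ∈ (I : Submodule k L)
          have h : ⁅a + b + c, a⁆ = ⁅b + c, a⁆ := by
            simp only [add_lie, lie_self]; abel
          rw [h]; exact hI3
        · show ⁅a + b + c, b⁆ ∈ (I : Submodule k L)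
          have h : ⁅a + b + c, b⁆ = ⁅a + c, b⁆ := by
            simp only [add_lie, lie_self]; abel
          rw [h]; exact hI2
        · show ⁅a + b + c, c⁆ ∈ (I : Submodule k L)
          have h : ⁅a + b + c, c⁆ = ⁅a + b, c⁆ := by
            simp only [add_lie, lie_self]; abel
          rw [h]; exact hI1)
    intro x
    exact this x
  have hcen : cen = LieSubmodule.Quotient.mk (N := I) (a + b + c) := by
    show LieSubmodule.Quotient.mk (N := I) a + LieSubmodule.Quotient.mk (N := I) b
        + LieSubmodule.Quotient.mk (N := I) c = _
    rw [← Submodule.Quotient.mk_add, ← Submodule.Quotient.mk_add]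
  have central : ∀ v : T, ⁅cen, v⁆ = 0 := by
    intro v
    obtain ⟨x, rfl⟩ := Submodule.Quotient.mk_surjective (I : Submodule k L) v
    rw [hcen]
    show LieSubmodule.Quotient.mk (N := I) ⁅a + b + c, x⁆ = 0
    rw [LieSubmodule.Quotient.mk_eq_zero']
    exact key x
  -- the "trace" character χ and the projection π
  let X : FreeLieAlgebra k (Fin 2) := FreeLieAlgebra.of k 0
  let Y : FreeLieAlgebra k (Fin 2) := FreeLieAlgebra.of k 1
  letI : LieRing k := LieRing.ofAssociativeRing
  let χ : L →ₗ⁅k⁆ k := FreeLieAlgebra.lift k ![1, 0, 0]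
  let π : L →ₗ⁅k⁆ FreeLieAlgebra k (Fin 2) := FreeLieAlgebra.lift k ![-(X + Y), X, Y]
  have hπa : π a = -(X + Y) := by
    rw [show π a = FreeLieAlgebra.lift k ![-(X + Y), X, Y] (FreeLieAlgebra.of k _) from rfl,
      FreeLieAlgebra.lift_of_apply]
    rfl
  have hπb : π b = X := by
    rw [show π b = FreeLieAlgebra.lift k ![-(X + Y), X, Y] (FreeLieAlgebra.of k _) from rfl,
      FreeLieAlgebra.lift_of_apply]
    rfl
  have hπc : π c = Y := by
    rw [show π c = FreeLieAlgebra.lift k ![-(X + Y), X, Y] (FreeLieAlgebra.of k _) from rfl,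
      FreeLieAlgebra.lift_of_apply]
    rfl
  have hχa : χ a = 1 := by
    rw [show χ a = FreeLieAlgebra.lift k ![(1:k), 0, 0] (FreeLieAlgebra.of k _) from rfl,
      FreeLieAlgebra.lift_of_apply]
    rfl
  have hχb : χ b = 0 := by
    rw [show χ b = FreeLieAlgebra.lift k ![(1:k), 0, 0] (FreeLieAlgebra.of k _) from rfl,
      FreeLieAlgebra.lift_of_apply]
    rfl
  have hχc : χ c = 0 := by
    rw [show χ c = FreeLieAlgebra.lift k ![(1:k), 0, 0] (FreeLieAlgebra.of k _) from rfl,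
      FreeLieAlgebra.lift_of_apply]
    rfl
  have hχI : ∀ x ∈ I, χ x = 0 := by
    have hle : I ≤ χ.ker := by
      apply LieSubmodule.lieSpan_le.mpr
      rintro x hx
      simp only [Set.mem_insert_iff, Set.mem_singleton_iff] at hx
      simp only [SetLike.mem_coe]
      rcases hx with rfl | rfl | rfl <;>
        · rw [LieHom.mem_ker, LieHom.map_lie, Ring.lie_def]
          ring
    intro x hx
    exact LieHom.mem_ker.mp (hle hx)
  have hπI : ∀ x ∈ I, π x = 0 := by
    have hle : I ≤ π.ker := by
      apply LieSubmodule.lieSpan_le.mpr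
      rintro x hx
      simp only [Set.mem_insert_iff, Set.mem_singleton_iff] at hx
      simp only [SetLike.mem_coe]
      rcases hx with rfl | rfl | rfl
      · rw [LieHom.mem_ker, LieHom.map_lie, map_add, hπa, hπb, hπc]
        have h : -(X + Y) + X = -Y := by abel
        rw [h, neg_lie, lie_self, neg_zero]
      · rw [LieHom.mem_ker, LieHom.map_lie, map_add, hπa, hπb, hπc]
        have h : -(X + Y) + Y = -X := by abel
        rw [h, neg_lie, lie_self, neg_zero]
      · rw [LieHom.mem_ker, LieHom.map_lie, map_add, hπa, hπb, hπc]
        have h : X + Y + -(X + Y) = (0 : FreeLieAlgebra k (Fin 2)) := by abel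
        rw [lie_neg, lie_add, add_lie, add_lie, lie_self, lie_self]
        rw [← lie_skew X Y]
        abel
    intro x hx
    exact LieHom.mem_ker.mp (hle hx)
  let χq : T →ₗ⁅k⁆ k := auxQuotLift I χ hχI
  let πq : T →ₗ⁅k⁆ FreeLieAlgebra k (Fin 2) := auxQuotLift I π hπI
  have hφ0 : φ (FreeLieAlgebra.of k 0) = t13 := by
    rw [show φ (FreeLieAlgebra.of k 0)
      = FreeLieAlgebra.lift k ![t13, t23] (FreeLieAlgebra.of k 0) from rfl,
      FreeLieAlgebra.lift_of_apply]
    rfl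
  have hφ1 : φ (FreeLieAlgebra.of k 1) = t23 := by
    rw [show φ (FreeLieAlgebra.of k 1)
      = FreeLieAlgebra.lift k ![t13, t23] (FreeLieAlgebra.of k 1) from rfl,
      FreeLieAlgebra.lift_of_apply]
    rfl
  have hχcen : χq cen = 1 := by
    rw [hcen]
    show χ (a + b + c) = 1
    rw [map_add, map_add, hχa, hχb, hχc]; ring
  have hχφ : ∀ w, χq (φ w) = 0 := by
    have h : χq.comp φ = (0 : FreeLieAlgebra k (Fin 2) →ₗ⁅k⁆ k) := by
      apply FreeLieAlgebra.hom_ext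
      intro i
      fin_cases i
      · show χq (φ (FreeLieAlgebra.of k 0)) = 0
        rw [hφ0]; exact hχb
      · show χq (φ (FreeLieAlgebra.of k 1)) = 0
        rw [hφ1]; exact hχc
    intro w
    exact LieHom.congr_fun h w
  have hπφ : ∀ w, πq (φ w) = w := by
    have h : πq.comp φ = LieHom.id := by
      apply FreeLieAlgebra.hom_ext
      intro i
      fin_cases i
      · show πq (φ (FreeLieAlgebra.of k 0)) = FreeLieAlgebra.of k 0
        rw [hφ0]; exact hπb
      · show πq (φ (FreeLieAlgebra.of k 1)) = FreeLieAlgebra.of k 1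
        rw [hφ1]; exact hπc
    intro w
    exact LieHom.congr_fun h w
  have hinj : Function.Injective φ := Function.LeftInverse.injective hπφ
  refine ⟨central, hinj, ?_, ?_⟩
  · rw [eq_bot_iff]
    rintro v hv
    rw [Submodule.mem_inf] at hv
    obtain ⟨hv1, hv2⟩ := hv
    rw [Submodule.mem_span_singleton] at hv1
    obtain ⟨s, rfl⟩ := hv1
    obtain ⟨w, hw⟩ := hv2
    have h1 : χq (s • cen) = s := by rw [map_smul, hχcen, smul_eq_mul, mul_one]
    have h2 : χq (s • cen) = 0 := by
      rw [← hw]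
      exact hχφ w
    have hs : s = 0 := h1.symm.trans h2
    simp [hs]
  · set S := Submodule.span k {cen} ⊔ LinearMap.range (φ : FreeLieAlgebra k (Fin 2) →ₗ[k] T)
      with hS
    have hclosed : ∀ x ∈ S, ∀ y ∈ S, ⁅x, y⁆ ∈ S := by
      intro x hx y hy
      rw [hS, Submodule.mem_sup] at hx hy
      obtain ⟨p, hp, q, hq, rfl⟩ := hx
      obtain ⟨p', hp', q', hq', rfl⟩ := hy
      rw [Submodule.mem_span_singleton] at hp hp'
      obtain ⟨s, rfl⟩ := hp
      obtain ⟨s', rfl⟩ := hp'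
      obtain ⟨u, rfl⟩ := hq
      obtain ⟨u', rfl⟩ := hq'
      have hc2 : ∀ z : T, ⁅z, cen⁆ = 0 := fun z => by
        rw [← lie_skew, central, neg_zero]
      have heq : ⁅s • cen + (φ : FreeLieAlgebra k (Fin 2) →ₗ[k] T) u,
          s' • cen + (φ : FreeLieAlgebra k (Fin 2) →ₗ[k] T) u'⁆ = φ ⁅u, u'⁆ := by
        rw [add_lie]
        simp only [add_lie, lie_add, smul_lie, lie_smul, central, hc2,
          smul_zero, zero_add, add_zero]
        exact (φ.map_lie u u').symm
      rw [heq]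
      exact Submodule.mem_sup_right ⟨⁅u, u'⁆, rfl⟩
    have h13 : t13 ∈ S := Submodule.mem_sup_right ⟨FreeLieAlgebra.of k 0, hφ0⟩
    have h23 : t23 ∈ S := Submodule.mem_sup_right ⟨FreeLieAlgebra.of k 1, hφ1⟩
    have hcS : cen ∈ S := Submodule.mem_sup_left (Submodule.mem_span_singleton_self cen)
    have h12 : t12 ∈ S := by
      have h : t12 = cen - t13 - t23 := by show t12 = t12 + t13 + t23 - t13 - t23; abel
      rw [h]
      exact S.sub_mem (S.sub_mem hcS h13) h23
    rw [eq_top_iff]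
    rintro v -
    obtain ⟨x, rfl⟩ := Submodule.Quotient.mk_surjective (I : Submodule k L) v
    have := aux_free_span k (S.comap (I : Submodule k L).mkQ)
      (fun x hx y hy => by
        exact hclosed _ hx _ hy)
      (fun i => by
        fin_cases i
        · exact h12
        · exact h13
        · exact h23)
      x
    exact this
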